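/- Let W_q = x₁ + x₂ + x₃ + x₄ + x₅ + q·(x₁x₂x₃x₄x₅)^{−1} in the Laurent polynomial ring ℚ[q][x₁^{±1},…,x₅^{±1}]. For M ∈ ℕ, the constant term (coefficient of x₁⁰⋯x₅⁰) of W_q^M equals (6d)!/(d!)⁶ · q^d if M = 6d for some d ∈ ℕ, and equals 0 if 6 does not divide M. -/

import Mathlib

open Finset Polynomial

noncomputable def mirrorQuinticW : AddMonoidAlgebra (Polynomial ℚ) (Fin 5 → ℤ) :=
  (∑ i : Fin 5, AddMonoidAlgebra.single (Pi.single i 1) (1 : Polynomial ℚ)) +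
    AddMonoidAlgebra.single (fun _ => (-1 : ℤ)) (Polynomial.X : Polynomial ℚ)

noncomputable def vQ : Fin 6 → (Fin 5 → ℤ) :=
  Fin.lastCases (fun _ => -1) (fun i => Pi.single i 1)

noncomputable def cQ : Fin 6 → Polynomial ℚ :=
  Fin.lastCases Polynomial.X (fun _ => 1)

lemma W_eq : mirrorQuinticW = ∑ i : Fin 6, AddMonoidAlgebra.single (vQ i) (cQ i) := by
  rw [Fin.sum_univ_castSucc]
  simp [mirrorQuinticW, vQ, cQ, -Fin.reduceLast]

lemma vQ_cond (k : Fin 6 → ℕ) :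
    (∑ i : Fin 6, (k i : ℤ) • vQ i = 0) ↔ ∀ j : Fin 5, k j.castSucc = k (Fin.last 5) := by
  constructor
  · intro h j
    have := congrFun h j
    rw [Fin.sum_univ_castSucc] at this
    simp [vQ, Pi.single_apply, Finset.sum_apply, mul_ite, -Fin.reduceLast] at this
    have h2 : (k j.castSucc : ℤ) = k (Fin.last 5) := by linarith
    exact_mod_cast h2
  · intro h
    funext j
    rw [Fin.sum_univ_castSucc]
    simp [vQ, Pi.single_apply, Finset.sum_apply, mul_ite, h j, -Fin.reduceLast]

lemma pow_apply' (M : ℕ) : (mirrorQuinticW ^ M).coeff 0 =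
    ∑ k ∈ Finset.piAntidiag (univ : Finset (Fin 6)) M,
      if ∀ j : Fin 5, k j.castSucc = k (Fin.last 5) then
        (Nat.multinomial univ k : Polynomial ℚ) * ∏ i, cQ i ^ k i else 0 := by
  rw [W_eq, Finset.sum_pow_eq_sum_piAntidiag]
  rw [AddMonoidAlgebra.coeff_sum, Finsupp.finset_sum_apply]
  refine Finset.sum_congr rfl fun k hk => ?_
  have : ∀ i : Fin 6, AddMonoidAlgebra.single (vQ i) (cQ i) ^ k i =
      AddMonoidAlgebra.single ((k i : ℤ) • vQ i) (cQ i ^ k i) := by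
    intro i; rw [AddMonoidAlgebra.single_pow]; norm_num
  simp_rw [this]
  rw [AddMonoidAlgebra.prod_single, AddMonoidAlgebra.natCast_def,
    AddMonoidAlgebra.single_mul_single, zero_add, AddMonoidAlgebra.coeff_single, Finsupp.single_apply]
  by_cases h : ∑ i : Fin 6, (k i : ℤ) • vQ i = 0
  · rw [if_pos h, if_pos ((vQ_cond k).mp h)]
  · rw [if_neg h, if_neg (fun hc => h ((vQ_cond k).mpr hc))]

lemma cond_sum {M : ℕ} (k : Fin 6 → ℕ) (hk : k ∈ Finset.piAntidiag (univ : Finset (Fin 6)) M)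
    (h : ∀ j : Fin 5, k j.castSucc = k (Fin.last 5)) : M = 6 * k (Fin.last 5) := by
  rw [Finset.mem_piAntidiag] at hk
  have : ∑ i : Fin 6, k i = M := hk.1
  rw [Fin.sum_univ_castSucc] at this
  simp only [h, Finset.sum_const, Finset.card_univ, Fintype.card_fin, smul_eq_mul] at this
  omega

theorem mirror_quintic_constant_term :
    (∀ d M : ℕ, M = 6 * d →
      (mirrorQuinticW ^ M).coeff 0 =
        ((Nat.factorial (6 * d) / (Nat.factorial d) ^ 6 : ℕ) : Polynomial ℚ) *
          Polynomial.X ^ d) ∧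
    (∀ M : ℕ, ¬ (6 ∣ M) → (mirrorQuinticW ^ M).coeff 0 = 0) := by
  constructor
  · intro d M hM
    rw [pow_apply']
    rw [Finset.sum_eq_single (fun _ => d)]
    · rw [if_pos (fun _ => rfl)]
      congr 1
      · congr 1
        simp [Nat.multinomial, Finset.prod_const, mul_comm]
      · rw [Fin.prod_univ_castSucc]
        simp [cQ, -Fin.reduceLast]
    · intro k hk hne
      rw [if_neg]
      intro h
      have h6 := cond_sum k hk h
      apply hne
      funext j
      have hd : k (Fin.last 5) = d := by omega
      refine Fin.lastCases hd (fun j => ?_) j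
      rw [h j, hd]
    · intro h
      exact absurd (by simp [Finset.mem_piAntidiag, hM, Fin.sum_univ_six]) h
  · intro M hM
    rw [pow_apply']
    refine Finset.sum_eq_zero fun k hk => ?_
    rw [if_neg]
    intro h
    exact hM ⟨k (Fin.last 5), cond_sum k hk h⟩
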